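/- Let S, Q be symmetric n×n real matrices with λ_{2m+1}(Q) = 0 for an integer m with 1 ≤ m ≤ n/4 − 1. Then for every positive integer p: tr((S+Q)^{2p+1}) − tr(S^{2p+1}) ≤ 2m·(λ_1(S+Q))^{2p+1} + (λ_n(S+Q))^{2p+1} + 3m·‖S‖^{2p+1}. -/

import Mathlib

open Matrix Finset Module
open scoped RealInnerProductSpace

section AuxStmt5
variable {n : ℕ}

lemma repr_eq_zero_of_mem_span (b : OrthonormalBasis (Fin n) ℝ (EuclideanSpace ℝ (Fin n)))
    (T : Finset (Fin n)) {x : EuclideanSpace ℝ (Fin n)}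
    (hx : x ∈ Submodule.span ℝ (b '' (T : Set (Fin n)))) {i : Fin n} (hi : i ∉ T) :
    b.repr x i = 0 := by
  have hker : Submodule.span ℝ (b '' (T : Set (Fin n)))
      ≤ LinearMap.ker ((innerSL ℝ (b i)).toLinearMap) := by
    rw [Submodule.span_le]
    rintro _ ⟨j, hj, rfl⟩
    have hij : i ≠ j := fun h => hi (h ▸ hj)
    have hb := b.orthonormal
    rw [orthonormal_iff_ite] at hb
    simp [LinearMap.mem_ker, hb i j, hij]
  have := hker hx
  rw [LinearMap.mem_ker] at this
  rw [b.repr_apply_apply]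
  simpa using this

lemma inner_eq_sum_repr (b : OrthonormalBasis (Fin n) ℝ (EuclideanSpace ℝ (Fin n)))
    (x y : EuclideanSpace ℝ (Fin n)) :
    ⟪x, y⟫ = ∑ i, (b.repr x i) * (b.repr y i) := by
  have h := b.repr.inner_map_map x y
  rw [← h, PiLp.inner_apply]
  simp [RCLike.inner_apply, mul_comm]

lemma toEuclideanLin_eigenvectorBasis {A : Matrix (Fin n) (Fin n) ℝ} (hA : A.IsHermitian)
    (i : Fin n) :
    Matrix.toEuclideanLin A (hA.eigenvectorBasis i)
      = hA.eigenvalues i • hA.eigenvectorBasis i := by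
  have h := hA.mulVec_eigenvectorBasis i
  rw [Matrix.toEuclideanLin_apply]
  ext j
  have := congrFun h j
  simpa using this

lemma quad_eq_sum {A : Matrix (Fin n) (Fin n) ℝ} (hA : A.IsHermitian)
    (x : EuclideanSpace ℝ (Fin n)) :
    ⟪x, Matrix.toEuclideanLin A x⟫ =
      ∑ i, hA.eigenvalues i * (hA.eigenvectorBasis.repr x i)^2 := by
  have hsym := (Matrix.isHermitian_iff_isSymmetric).1 hA
  have hrepr : ∀ i, hA.eigenvectorBasis.repr (Matrix.toEuclideanLin A x) i
      = hA.eigenvalues i * hA.eigenvectorBasis.repr x i := by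
    intro i
    rw [OrthonormalBasis.repr_apply_apply, ← hsym (hA.eigenvectorBasis i) x,
      toEuclideanLin_eigenvectorBasis hA i, real_inner_smul_left,
      hA.eigenvectorBasis.repr_apply_apply]
  rw [inner_eq_sum_repr hA.eigenvectorBasis]
  refine Finset.sum_congr rfl fun i _ => ?_
  rw [hrepr i]; ring

lemma norm_sq_eq_sum (b : OrthonormalBasis (Fin n) ℝ (EuclideanSpace ℝ (Fin n)))
    (x : EuclideanSpace ℝ (Fin n)) :
    ‖x‖^2 = ∑ i, (b.repr x i)^2 := by
  rw [← real_inner_self_eq_norm_sq, inner_eq_sum_repr b]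
  simp [sq]

lemma quad_le_of_mem_span {A : Matrix (Fin n) (Fin n) ℝ} (hA : A.IsHermitian)
    (T : Finset (Fin n)) (c : ℝ) (hT : ∀ i ∈ T, hA.eigenvalues i ≤ c)
    {x : EuclideanSpace ℝ (Fin n)}
    (hx : x ∈ Submodule.span ℝ (hA.eigenvectorBasis '' (T : Set (Fin n)))) :
    ⟪x, Matrix.toEuclideanLin A x⟫ ≤ c * ‖x‖^2 := by
  rw [quad_eq_sum hA, norm_sq_eq_sum hA.eigenvectorBasis, Finset.mul_sum]
  refine Finset.sum_le_sum fun i _ => ?_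
  by_cases hiT : i ∈ T
  · exact mul_le_mul_of_nonneg_right (hT i hiT) (sq_nonneg _)
  · rw [repr_eq_zero_of_mem_span _ T hx hiT]
    simp

lemma le_quad_of_mem_span {A : Matrix (Fin n) (Fin n) ℝ} (hA : A.IsHermitian)
    (T : Finset (Fin n)) (c : ℝ) (hT : ∀ i ∈ T, c ≤ hA.eigenvalues i)
    {x : EuclideanSpace ℝ (Fin n)}
    (hx : x ∈ Submodule.span ℝ (hA.eigenvectorBasis '' (T : Set (Fin n)))) :
    c * ‖x‖^2 ≤ ⟪x, Matrix.toEuclideanLin A x⟫ := by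
  rw [quad_eq_sum hA, norm_sq_eq_sum hA.eigenvectorBasis, Finset.mul_sum]
  refine Finset.sum_le_sum fun i _ => ?_
  by_cases hiT : i ∈ T
  · exact mul_le_mul_of_nonneg_right (hT i hiT) (sq_nonneg _)
  · rw [repr_eq_zero_of_mem_span _ T hx hiT]
    simp

lemma finrank_span_image (b : OrthonormalBasis (Fin n) ℝ (EuclideanSpace ℝ (Fin n)))
    (T : Finset (Fin n)) :
    finrank ℝ (Submodule.span ℝ (b '' (T : Set (Fin n)))) = T.card := by
  classical
  have hinj : Function.Injective b := b.orthonormal.linearIndependent.injective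
  have hli : LinearIndependent ℝ ((↑) : (b '' (T : Set (Fin n))) → EuclideanSpace ℝ (Fin n)) :=
    ((linearIndepOn_id_range_iff hinj).mpr b.orthonormal.linearIndependent).mono (Set.image_subset_range _ _)
  have himg : b '' (T : Set (Fin n)) = ((T.image b : Finset (EuclideanSpace ℝ (Fin n))) :
      Set (EuclideanSpace ℝ (Fin n))) := (Finset.coe_image).symm
  rw [himg] at hli ⊢
  rw [finrank_span_finset_eq_card hli, Finset.card_image_of_injective _ hinj]

lemma exists_ne_zero_mem_triple (W₁ W₂ W₃ : Submodule ℝ (EuclideanSpace ℝ (Fin n)))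
    (h : 2 * n < finrank ℝ W₁ + finrank ℝ W₂ + finrank ℝ W₃) :
    ∃ x, x ∈ W₁ ⊓ W₂ ⊓ W₃ ∧ x ≠ 0 := by
  have key : ∀ U V : Submodule ℝ (EuclideanSpace ℝ (Fin n)),
      finrank ℝ U + finrank ℝ V ≤ n + finrank ℝ (U ⊓ V : Submodule ℝ _) := by
    intro U V
    have h1 := Submodule.finrank_sup_add_finrank_inf_eq U V
    have h2 := Submodule.finrank_le (U ⊔ V)
    have hn : finrank ℝ (EuclideanSpace ℝ (Fin n)) = n := by simp
    omega
  have h1 := key W₁ W₂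
  have h2 := key (W₁ ⊓ W₂) W₃
  have hpos : 0 < finrank ℝ (W₁ ⊓ W₂ ⊓ W₃ : Submodule ℝ _) := by omega
  have hbot : (W₁ ⊓ W₂ ⊓ W₃ : Submodule ℝ _) ≠ ⊥ := by
    intro hb
    rw [hb, finrank_bot] at hpos
    exact lt_irrefl 0 hpos
  obtain ⟨x, hx, hx0⟩ := Submodule.exists_mem_ne_zero_of_ne_bot hbot
  exact ⟨x, hx, hx0⟩

lemma weyl_interlace {S Q : Matrix (Fin n) (Fin n) ℝ} (hS : S.IsHermitian) (hQ : Q.IsHermitian)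
    (hM : (S + Q).IsHermitian) (r : ℕ)
    (hQpos : (univ.filter fun i => 0 < hQ.eigenvalues i).card ≤ r)
    (k j : Fin n) (hkj : (k : ℕ) + r ≤ (j : ℕ)) :
    hM.eigenvalues (Tuple.sort hM.eigenvalues k) ≤ hS.eigenvalues (Tuple.sort hS.eigenvalues j) := by
  classical
  set σ := Tuple.sort hM.eigenvalues with hσ
  set τ := Tuple.sort hS.eigenvalues with hτ
  set T₁ : Finset (Fin n) := (Finset.Ici k).image σ with hT₁
  set T₂ : Finset (Fin n) := (Finset.Iic j).image τ with hT₂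
  set T₃ : Finset (Fin n) := univ.filter (fun i => hQ.eigenvalues i ≤ 0) with hT₃
  set W₁ := Submodule.span ℝ (hM.eigenvectorBasis '' (T₁ : Set (Fin n)))
  set W₂ := Submodule.span ℝ (hS.eigenvectorBasis '' (T₂ : Set (Fin n)))
  set W₃ := Submodule.span ℝ (hQ.eigenvectorBasis '' (T₃ : Set (Fin n)))
  have hc1 : finrank ℝ W₁ = n - (k : ℕ) := by
    rw [finrank_span_image, Finset.card_image_of_injective _ σ.injective, Fin.card_Ici]
  have hc2 : finrank ℝ W₂ = (j : ℕ) + 1 := by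
    rw [finrank_span_image, Finset.card_image_of_injective _ τ.injective, Fin.card_Iic]
  have hc3 : n ≤ finrank ℝ W₃ + r := by
    rw [finrank_span_image]
    have hsplit : T₃.card + (univ.filter fun i => ¬ hQ.eigenvalues i ≤ 0).card = n := by
      rw [hT₃]
      simpa using Finset.card_filter_add_card_filter_not
        (s := (univ : Finset (Fin n))) (p := fun i => hQ.eigenvalues i ≤ 0)
    have h2 : (univ.filter fun i => ¬ hQ.eigenvalues i ≤ 0).card ≤ r := by
      simpa [not_le] using hQpos
    omega
  obtain ⟨x, hx, hx0⟩ := exists_ne_zero_mem_triple W₁ W₂ W₃ (by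
    have hk := k.isLt
    have hj := j.isLt
    omega)
  obtain ⟨⟨hx1, hx2⟩, hx3⟩ := hx
  have hnorm : 0 < ‖x‖^2 := pow_pos (norm_pos_iff.mpr hx0) 2
  have hq1 : hM.eigenvalues (σ k) * ‖x‖^2 ≤ ⟪x, Matrix.toEuclideanLin (S + Q) x⟫ := by
    refine le_quad_of_mem_span hM T₁ _ ?_ hx1
    rintro i hi
    rw [hT₁] at hi
    obtain ⟨l, hl, rfl⟩ := Finset.mem_image.mp hi
    exact Tuple.monotone_sort hM.eigenvalues (Finset.mem_Ici.mp hl)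
  have hq2 : ⟪x, Matrix.toEuclideanLin S x⟫ ≤ hS.eigenvalues (τ j) * ‖x‖^2 := by
    refine quad_le_of_mem_span hS T₂ _ ?_ hx2
    rintro i hi
    rw [hT₂] at hi
    obtain ⟨l, hl, rfl⟩ := Finset.mem_image.mp hi
    exact Tuple.monotone_sort hS.eigenvalues (Finset.mem_Iic.mp hl)
  have hq3 : ⟪x, Matrix.toEuclideanLin Q x⟫ ≤ 0 := by
    have := quad_le_of_mem_span hQ T₃ 0 ?_ hx3
    · simpa using this
    · intro i hi
      exact (Finset.mem_filter.mp hi).2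
  have hadd : ⟪x, Matrix.toEuclideanLin (S + Q) x⟫
      = ⟪x, Matrix.toEuclideanLin S x⟫ + ⟪x, Matrix.toEuclideanLin Q x⟫ := by
    rw [map_add]
    rw [LinearMap.add_apply, inner_add_right]
  have : hM.eigenvalues (σ k) * ‖x‖^2 ≤ hS.eigenvalues (τ j) * ‖x‖^2 := by
    rw [hadd] at hq1
    linarith
  exact le_of_mul_le_mul_right this hnorm

lemma trace_pow_eq_sum_eigenvalues {A : Matrix (Fin n) (Fin n) ℝ} (hA : A.IsHermitian) (k : ℕ) :
    Matrix.trace (A ^ k) = ∑ i, hA.eigenvalues i ^ k := by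
  classical
  set U : Matrix (Fin n) (Fin n) ℝ := (hA.eigenvectorUnitary : Matrix (Fin n) (Fin n) ℝ) with hU
  set D : Matrix (Fin n) (Fin n) ℝ := diagonal (RCLike.ofReal ∘ hA.eigenvalues) with hD
  have hU1 : star U * U = 1 := Matrix.mem_unitaryGroup_iff'.mp hA.eigenvectorUnitary.2
  have hU2 : U * star U = 1 := Matrix.mem_unitaryGroup_iff.mp hA.eigenvectorUnitary.2
  have hspec : A = U * D * star U := hA.spectral_theorem
  have hpow : A ^ k = U * D ^ k * star U := by
    induction k with
    | zero => simp [hU2]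
    | succ k ih =>
      rw [pow_succ, ih]
      conv_lhs => rw [hspec]
      calc U * D ^ k * star U * (U * D * star U)
          = U * D ^ k * ((star U * U) * (D * star U)) := by
            simp only [Matrix.mul_assoc]
        _ = U * (D ^ k * D) * star U := by
            rw [hU1, Matrix.one_mul]
            simp only [Matrix.mul_assoc]
        _ = U * D ^ (k + 1) * star U := by rw [← pow_succ]
  rw [hpow, Matrix.trace_mul_comm, ← Matrix.mul_assoc, hU1, Matrix.one_mul, hD,
    Matrix.diagonal_pow, Matrix.trace_diagonal]
  simp

end AuxStmt5

/-- Odd-power trace difference bound for a low-rank symmetric perturbation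
(Lemma 9 of the companion paper): if `Q` has at most `2m` nonzero eigenvalues and
`1 ≤ m ≤ n/4 - 1`, then for every `p ≥ 1`,
`tr((S+Q)^{2p+1}) − tr(S^{2p+1}) ≤ 2m·λ₁(S+Q)^{2p+1} + λₙ(S+Q)^{2p+1} + 3m‖S‖^{2p+1}`. -/
theorem stmt5 {n : ℕ} (m p : ℕ) (S Q : Matrix (Fin n) (Fin n) ℝ)
    (hS : S.IsHermitian) (hQ : Q.IsHermitian)
    (hm1 : 1 ≤ m) (hm2 : (m : ℝ) ≤ (n : ℝ) / 4 - 1)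
    (hrank : (Finset.univ.filter (fun i => hQ.eigenvalues i ≠ 0)).card ≤ 2 * m)
    (hp : 1 ≤ p) :
    Matrix.trace ((S + Q) ^ (2 * p + 1)) - Matrix.trace (S ^ (2 * p + 1))
      ≤ 2 * (m : ℝ) * (⨆ i, (hS.add hQ).eigenvalues i) ^ (2 * p + 1)
        + (⨅ i, (hS.add hQ).eigenvalues i) ^ (2 * p + 1)
        + 3 * (m : ℝ) * (⨆ i, |hS.eigenvalues i|) ^ (2 * p + 1) := by
  classical
  have h4m : 4 * m + 4 ≤ n := by
    have h4 : 4 * (m : ℝ) + 4 ≤ (n : ℝ) := by linarith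
    exact_mod_cast h4
  have hn0 : 0 < n := by omega
  haveI : Nonempty (Fin n) := ⟨⟨0, hn0⟩⟩
  set o := 2 * p + 1 with ho'
  have ho : Odd o := by rw [ho']; exact odd_two_mul_add_one p
  set σ := Tuple.sort (hS.add hQ).eigenvalues with hσ
  set τ := Tuple.sort hS.eigenvalues with hτ
  set μ : ℕ → ℝ := fun k => if h : k < n then (hS.add hQ).eigenvalues (σ ⟨k, h⟩) else 0 with hμ
  set ν : ℕ → ℝ := fun k => if h : k < n then hS.eigenvalues (τ ⟨k, h⟩) else 0 with hν
  have htr1 : Matrix.trace ((S + Q) ^ o) = ∑ k ∈ Finset.range n, μ k ^ o := by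
    rw [trace_pow_eq_sum_eigenvalues (hS.add hQ) o,
      ← Equiv.sum_comp σ (fun i => (hS.add hQ).eigenvalues i ^ o),
      ← Fin.sum_univ_eq_sum_range (fun k => μ k ^ o) n]
    refine Finset.sum_congr rfl fun i _ => ?_
    simp [hμ, i.isLt]
  have htr2 : Matrix.trace (S ^ o) = ∑ k ∈ Finset.range n, ν k ^ o := by
    rw [trace_pow_eq_sum_eigenvalues hS o,
      ← Equiv.sum_comp τ (fun i => hS.eigenvalues i ^ o),
      ← Fin.sum_univ_eq_sum_range (fun k => ν k ^ o) n]
    refine Finset.sum_congr rfl fun i _ => ?_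
    simp [hν, i.isLt]
  have hweyl : ∀ k, 1 ≤ k → k < n - 2 * m → μ k ≤ ν (k + 2 * m) := by
    intro k hk1 hk2
    have h1 : k < n := by omega
    have h2 : k + 2 * m < n := by omega
    have hQpos : (univ.filter fun i => 0 < hQ.eigenvalues i).card ≤ 2 * m := by
      refine le_trans (Finset.card_le_card (Finset.monotone_filter_right _ ?_)) hrank
      intro i _ hi
      exact hi.ne'
    simp only [hμ, hν, dif_pos h1, dif_pos h2]
    exact weyl_interlace hS hQ (hS.add hQ) (2 * m) hQpos ⟨k, h1⟩ ⟨k + 2 * m, h2⟩ (by simp)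
  have e1 : ∑ k ∈ Finset.range n, μ k ^ o
      = (∑ k ∈ Finset.Ico 0 1, μ k ^ o) + (∑ k ∈ Finset.Ico 1 (n - 2 * m), μ k ^ o)
        + ∑ k ∈ Finset.Ico (n - 2 * m) n, μ k ^ o := by
    rw [Finset.range_eq_Ico,
      ← Finset.sum_Ico_consecutive (fun k => μ k ^ o)
        (show (0 : ℕ) ≤ n - 2 * m by omega) (show n - 2 * m ≤ n by omega),
      ← Finset.sum_Ico_consecutive (fun k => μ k ^ o)
        (show (0 : ℕ) ≤ 1 by omega) (show 1 ≤ n - 2 * m by omega)]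
  have e2 : ∑ k ∈ Finset.range n, ν k ^ o
      = (∑ k ∈ Finset.Ico 0 (2 * m + 1), ν k ^ o) + ∑ k ∈ Finset.Ico (2 * m + 1) n, ν k ^ o := by
    rw [Finset.range_eq_Ico,
      ← Finset.sum_Ico_consecutive (fun k => ν k ^ o)
        (show (0 : ℕ) ≤ 2 * m + 1 by omega) (show 2 * m + 1 ≤ n by omega)]
  have hmid : ∑ k ∈ Finset.Ico 1 (n - 2 * m), μ k ^ o
      ≤ ∑ k ∈ Finset.Ico (2 * m + 1) n, ν k ^ o := by
    have hmap : ∑ k ∈ Finset.Ico 1 (n - 2 * m), ν (k + 2 * m) ^ o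
        = ∑ k ∈ Finset.Ico (2 * m + 1) n, ν k ^ o := by
      rw [Finset.sum_Ico_add' (fun k => ν k ^ o) 1 (n - 2 * m) (2 * m),
        show 1 + 2 * m = 2 * m + 1 from by omega, show n - 2 * m + 2 * m = n from by omega]
    rw [← hmap]
    refine Finset.sum_le_sum fun k hk => ?_
    rw [Finset.mem_Ico] at hk
    exact ho.strictMono_pow.monotone (hweyl k hk.1 hk.2)
  have htop : ∑ k ∈ Finset.Ico (n - 2 * m) n, μ k ^ o ≤ 2 * (m : ℝ) * (⨆ i, (hS.add hQ).eigenvalues i) ^ o := by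
    have hble : ∀ k ∈ Finset.Ico (n - 2 * m) n, μ k ^ o ≤ (⨆ i, (hS.add hQ).eigenvalues i) ^ o := by
      intro k hk
      rw [Finset.mem_Ico] at hk
      refine ho.strictMono_pow.monotone ?_
      simp only [hμ, dif_pos hk.2]
      exact le_ciSup (f := fun i => (hS.add hQ).eigenvalues i) (Finite.bddAbove_range _) _
    calc ∑ k ∈ Finset.Ico (n - 2 * m) n, μ k ^ o
        ≤ (Finset.Ico (n - 2 * m) n).card • (⨆ i, (hS.add hQ).eigenvalues i) ^ o := Finset.sum_le_card_nsmul _ _ _ hble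
      _ = 2 * (m : ℝ) * (⨆ i, (hS.add hQ).eigenvalues i) ^ o := by
          rw [Nat.card_Ico, show n - (n - 2 * m) = 2 * m by omega, nsmul_eq_mul]
          push_cast
          ring
  have hcnn : 0 ≤ ⨆ i, |hS.eigenvalues i| := le_trans (abs_nonneg _) (le_ciSup (f := fun i => |hS.eigenvalues i|) (Finite.bddAbove_range _) ⟨0, hn0⟩)
  have hbot : -(∑ k ∈ Finset.Ico 0 (2 * m + 1), ν k ^ o) ≤ 3 * (m : ℝ) * (⨆ i, |hS.eigenvalues i|) ^ o := by
    have hterm : ∀ k ∈ Finset.Ico 0 (2 * m + 1), -(ν k ^ o) ≤ (⨆ i, |hS.eigenvalues i|) ^ o := by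
      intro k hk
      rw [Finset.mem_Ico] at hk
      have h1 : k < n := by omega
      rw [← Odd.neg_pow ho]
      refine ho.strictMono_pow.monotone ?_
      simp only [hν, dif_pos h1]
      exact le_trans (neg_le_abs _) (le_ciSup (f := fun i => |hS.eigenvalues i|) (Finite.bddAbove_range _) _)
    calc -(∑ k ∈ Finset.Ico 0 (2 * m + 1), ν k ^ o)
        = ∑ k ∈ Finset.Ico 0 (2 * m + 1), -(ν k ^ o) := by rw [Finset.sum_neg_distrib]
      _ ≤ (Finset.Ico 0 (2 * m + 1)).card • (⨆ i, |hS.eigenvalues i|) ^ o := Finset.sum_le_card_nsmul _ _ _ hterm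
      _ = (2 * (m : ℝ) + 1) * (⨆ i, |hS.eigenvalues i|) ^ o := by
          rw [Nat.card_Ico, nsmul_eq_mul]
          push_cast
          ring
      _ ≤ 3 * (m : ℝ) * (⨆ i, |hS.eigenvalues i|) ^ o := by
          have hco : (0 : ℝ) ≤ (⨆ i, |hS.eigenvalues i|) ^ o := pow_nonneg hcnn o
          have hmr : (2 * (m : ℝ) + 1) ≤ 3 * (m : ℝ) := by
            have : (1 : ℝ) ≤ (m : ℝ) := by exact_mod_cast hm1
            linarith
          exact mul_le_mul_of_nonneg_right hmr hco
  have hsing : ∑ k ∈ Finset.Ico 0 1, μ k ^ o ≤ (⨅ i, (hS.add hQ).eigenvalues i) ^ o := by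
    rw [Nat.Ico_zero_eq_range, Finset.sum_range_one]
    refine ho.strictMono_pow.monotone ?_
    refine le_ciInf fun i => ?_
    simp only [hμ, dif_pos hn0]
    have heq : (hS.add hQ).eigenvalues i = ((hS.add hQ).eigenvalues ∘ σ) (σ.symm i) := by simp
    rw [heq]
    have h0 : (⟨0, hn0⟩ : Fin n) ≤ σ.symm i := by
      rw [Fin.le_def]
      exact Nat.zero_le _
    exact Tuple.monotone_sort ((hS.add hQ).eigenvalues) h0
  rw [htr1, htr2]
  linarith [e1, e2, hmid, htop, hbot, hsing]
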